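/- Let F_s = k_s(t) be rational function fields over fields k_s, let K = ∏_{s∈S} k_s / D, F = K(t), and let U(F) = ∏_{s∈S} F_s / D be the ultra-hull of F. Then a polynomial P ∈ F[x] is irreducible over F if and only if P is irreducible over U(F). -/

import Mathlib

open Polynomial

lemma shape_coeff {R : Type*} [CommRing R] (m : ℕ) (c : ℕ → R) (i : ℕ) :
    (X ^ m + ∑ i' ∈ Finset.range m, C (c i') * X ^ i').coeff i =
      if i = m then 1 else if i < m then c i else 0 := by
  rw [coeff_add, coeff_X_pow, finset_sum_coeff]
  simp only [coeff_C_mul, coeff_X_pow, mul_ite, mul_one, mul_zero]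
  rw [Finset.sum_ite_eq (Finset.range m) i (fun i' => c i')]
  by_cases h1 : i = m
  · subst h1; simp
  · simp only [h1, if_false, Finset.mem_range, zero_add]

lemma shape_natDegree_le {R : Type*} [CommRing R] (m : ℕ) (c : ℕ → R) :
    (X ^ m + ∑ i' ∈ Finset.range m, C (c i') * X ^ i').natDegree ≤ m := by
  refine natDegree_le_iff_coeff_eq_zero.mpr fun N hN => ?_
  rw [shape_coeff, if_neg (by omega), if_neg (by omega)]

lemma shape_monic {R : Type*} [CommRing R] [Nontrivial R] (m : ℕ) (c : ℕ → R) :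
    (X ^ m + ∑ i' ∈ Finset.range m, C (c i') * X ^ i').Monic ∧
    (X ^ m + ∑ i' ∈ Finset.range m, C (c i') * X ^ i').natDegree = m := by
  have hcm : (X ^ m + ∑ i' ∈ Finset.range m, C (c i') * X ^ i').coeff m = 1 := by
    rw [shape_coeff, if_pos rfl]
  have hdeg : (X ^ m + ∑ i' ∈ Finset.range m, C (c i') * X ^ i').natDegree = m :=
    le_antisymm (shape_natDegree_le m c)
      (le_natDegree_of_ne_zero (by rw [hcm]; exact one_ne_zero))
  exact ⟨by rw [Monic, Polynomial.leadingCoeff, hdeg, hcm], hdeg⟩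

lemma shape2_coeff {R : Type*} [CommRing R] (m : ℕ) (c : ℕ → R) (i : ℕ) :
    (∑ i' ∈ Finset.range m, C (c i') * X ^ i').coeff i = if i < m then c i else 0 := by
  rw [finset_sum_coeff]
  simp only [coeff_C_mul, coeff_X_pow, mul_ite, mul_one, mul_zero]
  rw [Finset.sum_ite_eq (Finset.range m) i (fun i' => c i')]
  simp [Finset.mem_range]

lemma ratfunc_intDegree_inv {κ : Type*} [Field κ] {x : RatFunc κ} (hx : x ≠ 0) :
    x⁻¹.intDegree = -x.intDegree := by
  have h := RatFunc.intDegree_mul (inv_ne_zero hx) hx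
  rw [inv_mul_cancel₀ hx, RatFunc.intDegree_one] at h
  omega

lemma ratfunc_intDegree_pow {κ : Type*} [Field κ] {x : RatFunc κ} (hx : x ≠ 0) (m : ℕ) :
    (x ^ m).intDegree = m * x.intDegree := by
  induction m with
  | zero => simp [RatFunc.intDegree_one]
  | succ m ih =>
      rw [pow_succ, RatFunc.intDegree_mul (pow_ne_zero m hx) hx, ih]
      push_cast; ring

lemma infty_val_le_one_iff {κ : Type*} [Field κ] [DecidableEq (RatFunc κ)] (x : RatFunc κ) :
    FunctionField.inftyValuation κ x ≤ 1 ↔ x = 0 ∨ x.intDegree ≤ 0 := by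
  by_cases hx : x = 0
  · simp only [hx, map_zero, true_or, iff_true]
    exact zero_le'
  · rw [show FunctionField.inftyValuation κ x = RatFunc.inftyValuationDef κ x from rfl,
      RatFunc.inftyValuation_of_nonzero κ hx]
    simp only [hx, false_or]
    rw [show (1 : WithZero (Multiplicative ℤ)) = ((1 : Multiplicative ℤ) : WithZero (Multiplicative ℤ)) from rfl,
      show ((1 : Multiplicative ℤ) : WithZero (Multiplicative ℤ)) = WithZero.exp (0 : ℤ) from rfl,
      WithZero.exp_le_exp]

lemma ratfunc_core {κ : Type*} [Field κ] {n d M : ℕ} (hd1 : 1 ≤ d) (hdn : d < n)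
    (g : κ[X]) (hg : g ≠ 0) (hgM : g.natDegree ≤ M)
    (f : ℕ → κ[X]) (hfM : ∀ i, i < n → (f i).natDegree ≤ M)
    (A B : Polynomial (RatFunc κ)) (hA : A.Monic) (hB : B.Monic)
    (hdA : A.natDegree = d) (hn : (A * B).natDegree = n)
    (hco : ∀ i < n, (A * B).coeff i =
      algebraMap κ[X] (RatFunc κ) (f i) / algebraMap κ[X] (RatFunc κ) g) :
    ∀ j, ∃ u : κ[X], u.natDegree ≤ (2 * n + 1) * M ∧
      A.coeff j * algebraMap κ[X] (RatFunc κ) (g ^ d) = algebraMap κ[X] (RatFunc κ) u := by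
  classical
  have hc0 : algebraMap κ[X] (RatFunc κ) g ≠ 0 := RatFunc.algebraMap_ne_zero hg
  have hP : (A * B).Monic := hA.mul hB
  have hPcn : (A * B).coeff n = 1 := by
    have h := hP.coeff_natDegree; rwa [hn] at h
  -- ## Part 1 : finite places
  have hF1monic : (X ^ n + ∑ i ∈ Finset.range n, C (f i * g ^ (n - 1 - i)) * X ^ i).Monic :=
    (shape_monic n _).1
  have hF1map : (X ^ n + ∑ i ∈ Finset.range n, C (f i * g ^ (n - 1 - i)) * X ^ i).map
        (algebraMap κ[X] (RatFunc κ))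
      = (A * B).scaleRoots (algebraMap κ[X] (RatFunc κ) g) := by
    ext i
    rw [coeff_map, shape_coeff, coeff_scaleRoots, hn]
    rcases lt_trichotomy i n with hi | hi | hi
    · rw [if_neg (by omega), if_pos hi, hco i hi]
      have h2 : n - i = (n - 1 - i) + 1 := by omega
      rw [h2, pow_succ, map_mul, map_pow]
      field_simp
    · rw [if_pos hi, hi, Nat.sub_self, pow_zero, mul_one, hPcn, map_one]
    · rw [if_neg (by omega), if_neg (by omega),
        coeff_eq_zero_of_natDegree_lt (by omega), zero_mul, map_zero]
  have hdvd1 : A.scaleRoots (algebraMap κ[X] (RatFunc κ) g) ∣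
      (X ^ n + ∑ i ∈ Finset.range n, C (f i * g ^ (n - 1 - i)) * X ^ i).map
        (algebraMap κ[X] (RatFunc κ)) := by
    rw [hF1map, mul_scaleRoots_of_noZeroDivisors]
    exact dvd_mul_right _ _
  obtain ⟨A1, hA1⟩ := IsIntegrallyClosed.eq_map_mul_C_of_dvd (RatFunc κ) hF1monic hdvd1
  have hA1' : A1.map (algebraMap κ[X] (RatFunc κ))
      = A.scaleRoots (algebraMap κ[X] (RatFunc κ) g) := by
    have hm : (A.scaleRoots (algebraMap κ[X] (RatFunc κ) g)).leadingCoeff = 1 :=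
      (monic_scaleRoots_iff _).mpr hA
    rwa [hm, map_one, mul_one] at hA1
  have hA1coeff : ∀ j, algebraMap κ[X] (RatFunc κ) (A1.coeff j)
      = A.coeff j * (algebraMap κ[X] (RatFunc κ) g) ^ (d - j) := by
    intro j
    have h := congrArg (fun p => p.coeff j) hA1'
    simpa [coeff_map, coeff_scaleRoots, hdA] using h
  -- ## Part 2 : the place at infinity
  haveI := Classical.decEq (RatFunc κ)
  have hXM0 : algebraMap κ[X] (RatFunc κ) (Polynomial.X ^ M) ≠ 0 :=
    RatFunc.algebraMap_ne_zero (pow_ne_zero M X_ne_zero)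
  set sM : RatFunc κ := (algebraMap κ[X] (RatFunc κ) (Polynomial.X ^ M))⁻¹ with hsM
  have hsM0 : sM ≠ 0 := inv_ne_zero hXM0
  have hsMdeg : sM.intDegree = -(M : ℤ) := by
    rw [hsM, ratfunc_intDegree_inv hXM0, RatFunc.intDegree_polynomial]
    simp
  have hcoP : ∀ i, i < n → (A * B).coeff i ≠ 0 → ((A * B).coeff i).intDegree ≤ (M : ℤ) := by
    intro i hi hne
    have hrep := hco i hi
    have hfne : f i ≠ 0 := by
      intro h0; rw [h0, map_zero, zero_div] at hrep; exact hne hrep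
    have hmul : (A * B).coeff i * algebraMap κ[X] (RatFunc κ) g
        = algebraMap κ[X] (RatFunc κ) (f i) := by
      rw [hrep]; field_simp
    have h := congrArg RatFunc.intDegree hmul
    rw [RatFunc.intDegree_mul hne hc0, RatFunc.intDegree_polynomial,
      RatFunc.intDegree_polynomial] at h
    have h1 : (g.natDegree : ℤ) ≥ 0 := Int.ofNat_nonneg _
    have h2 : ((f i).natDegree : ℤ) ≤ M := by exact_mod_cast hfM i hi
    omega
  have hints : (FunctionField.inftyValuation κ).Integers
      (FunctionField.inftyValuation κ).valuationSubring :=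
    { hom_inj := Subtype.coe_injective
      map_le_one := fun r => r.2
      exists_of_le_one := fun r hr => ⟨⟨r, hr⟩, rfl⟩ }
  haveI : IsIntegrallyClosed (FunctionField.inftyValuation κ).valuationSubring :=
    hints.isIntegrallyClosed
  have hscale_mem : ∀ i, ((A * B).scaleRoots sM).coeff i
      ∈ (FunctionField.inftyValuation κ).valuationSubring := by
    intro i
    rw [Valuation.mem_valuationSubring_iff, coeff_scaleRoots, hn, infty_val_le_one_iff]
    by_cases hz : (A * B).coeff i = 0
    · left; rw [hz, zero_mul]
    have hile : i ≤ n := by rw [← hn]; exact le_natDegree_of_ne_zero hz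
    rcases eq_or_lt_of_le hile with hi | hi
    · right
      rw [hi, Nat.sub_self, pow_zero, mul_one, hPcn, RatFunc.intDegree_one]
    · right
      rw [RatFunc.intDegree_mul hz (pow_ne_zero _ hsM0), ratfunc_intDegree_pow hsM0, hsMdeg]
      have h2 := hcoP i hi hz
      have h3 : (1 : ℤ) ≤ ((n - i : ℕ) : ℤ) := by
        have : 1 ≤ n - i := by omega
        exact_mod_cast this
      nlinarith [Int.ofNat_nonneg M]
  have hlift : (A * B).scaleRoots sM ∈ Polynomial.lifts
      (algebraMap (FunctionField.inftyValuation κ).valuationSubring (RatFunc κ)) := by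
    rw [lifts_iff_coeff_lifts]
    intro m
    exact ⟨⟨_, hscale_mem m⟩, rfl⟩
  obtain ⟨F2, hF2map, _, hF2monic⟩ :=
    lifts_and_degree_eq_and_monic hlift ((monic_scaleRoots_iff sM).mpr hP)
  have hdvd2 : A.scaleRoots sM ∣ F2.map
      (algebraMap (FunctionField.inftyValuation κ).valuationSubring (RatFunc κ)) := by
    rw [hF2map, mul_scaleRoots_of_noZeroDivisors]
    exact dvd_mul_right _ _
  obtain ⟨A2, hA2⟩ := IsIntegrallyClosed.eq_map_mul_C_of_dvd (RatFunc κ) hF2monic hdvd2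
  have hA2' : A2.map (algebraMap (FunctionField.inftyValuation κ).valuationSubring (RatFunc κ))
      = A.scaleRoots sM := by
    have hm : (A.scaleRoots sM).leadingCoeff = 1 := (monic_scaleRoots_iff _).mpr hA
    rwa [hm, map_one, mul_one] at hA2
  have hbound : ∀ j, A.coeff j ≠ 0 → (A.coeff j).intDegree ≤ (M : ℤ) * d := by
    intro j hz
    have hjd : j ≤ d := by rw [← hdA]; exact le_natDegree_of_ne_zero hz
    have hmem2 : A.coeff j * sM ^ (d - j) ∈ (FunctionField.inftyValuation κ).valuationSubring := by
      have h := congrArg (fun p => p.coeff j) hA2'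
      simp only [coeff_map, coeff_scaleRoots, hdA] at h
      rw [← h]
      exact (A2.coeff j).2
    rw [Valuation.mem_valuationSubring_iff, infty_val_le_one_iff] at hmem2
    rcases hmem2 with h0 | hle
    · exact absurd h0 (mul_ne_zero hz (pow_ne_zero _ hsM0))
    · rw [RatFunc.intDegree_mul hz (pow_ne_zero _ hsM0), ratfunc_intDegree_pow hsM0,
        hsMdeg] at hle
      have h5 : ((d - j : ℕ) : ℤ) ≤ (d : ℤ) := by
        have h6 : d - j ≤ d := Nat.sub_le d j
        exact_mod_cast h6
      have h7 : (0 : ℤ) ≤ ((d - j : ℕ) : ℤ) := Int.ofNat_nonneg _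
      nlinarith [Int.ofNat_nonneg M]
  -- ## Part 3 : combine
  intro j
  by_cases hz : A.coeff j = 0
  · exact ⟨0, by simp, by simp [hz]⟩
  have hjd : j ≤ d := by rw [← hdA]; exact le_natDegree_of_ne_zero hz
  have hA1j := hA1coeff j
  have hA1jne : A1.coeff j ≠ 0 := by
    intro h0
    rw [h0, map_zero] at hA1j
    exact mul_ne_zero hz (pow_ne_zero _ hc0) hA1j.symm
  refine ⟨A1.coeff j * g ^ j, ?_, ?_⟩
  · -- degree bound
    have hnat : ((A1.coeff j).natDegree : ℤ)
        = (A.coeff j).intDegree + ((d - j : ℕ) : ℤ) * g.natDegree := by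
      have h1 : (algebraMap κ[X] (RatFunc κ) (A1.coeff j)).intDegree
          = ((A1.coeff j).natDegree : ℤ) := RatFunc.intDegree_polynomial
      rw [← h1, hA1j, RatFunc.intDegree_mul hz (pow_ne_zero _ hc0),
        ratfunc_intDegree_pow hc0, RatFunc.intDegree_polynomial]
    have hnd : (A1.coeff j * g ^ j).natDegree = (A1.coeff j).natDegree + j * g.natDegree := by
      rw [natDegree_mul hA1jne (pow_ne_zero _ hg), natDegree_pow]
    rw [hnd]
    have hb := hbound j hz
    have hMg : (g.natDegree : ℤ) ≤ M := by exact_mod_cast hgM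
    have hdn' : (d : ℤ) < n := by exact_mod_cast hdn
    have hjd' : ((d - j : ℕ) : ℤ) = (d : ℤ) - (j : ℤ) := by omega
    have hfin : (((A1.coeff j).natDegree + j * g.natDegree : ℕ) : ℤ)
        ≤ (((2 * n + 1) * M : ℕ) : ℤ) := by
      push_cast
      rw [hnat, hjd']
      have hgz : (0 : ℤ) ≤ g.natDegree := Int.ofNat_nonneg _
      have hjz : (0 : ℤ) ≤ j := Int.ofNat_nonneg j
      have hjd'' : (j : ℤ) ≤ d := by exact_mod_cast hjd
      nlinarith [Int.ofNat_nonneg M, Int.ofNat_nonneg n]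
    exact_mod_cast hfin
  · -- the identity
    rw [map_mul, map_pow, map_pow, hA1j, mul_assoc, ← pow_add]
    congr 2
    omega

/-- `K` (with surjection `π` from the product) is the ultraproduct of the family `R`
with respect to the ultrafilter `D`. -/
def IsUltraproduct {S : Type*} {R : S → Type*} [∀ s, CommRing (R s)]
    {K : Type*} [CommRing K] (D : Ultrafilter S) (π : (∀ s, R s) →+* K) : Prop :=
  Function.Surjective π ∧ ∀ f g : ∀ s, R s, π f = π g ↔ {s | f s = g s} ∈ D

namespace IsUltraproduct

variable {S : Type*} {R : S → Type*} [∀ s, CommRing (R s)]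
    {K : Type*} [CommRing K] {D : Ultrafilter S} {π : (∀ s, R s) →+* K}

lemma eq_zero_iff (h : IsUltraproduct D π) (f : ∀ s, R s) :
    π f = 0 ↔ {s | f s = 0} ∈ D := by
  simpa using h.2 f 0

lemma ne_zero_iff (h : IsUltraproduct D π) (f : ∀ s, R s) :
    π f ≠ 0 ↔ {s | f s ≠ 0} ∈ D := by
  rw [Ne, h.eq_zero_iff, ← Ultrafilter.compl_mem_iff_notMem]
  rfl

lemma map_div {S : Type*} {R : S → Type*} [∀ s, Field (R s)] {K : Type*} [Field K]
    {D : Ultrafilter S} {π : (∀ s, R s) →+* K} (h : IsUltraproduct D π)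
    (x y : ∀ s, R s) (hy : π y ≠ 0) :
    π (fun s => x s / y s) = π x / π y := by
  have hT : {s | y s ≠ 0} ∈ D := (h.ne_zero_iff y).mp hy
  have h1 : π ((fun s => x s / y s) * y) = π x := by
    refine (h.2 _ _).mpr (Filter.mem_of_superset hT fun s hs => ?_)
    exact div_mul_cancel₀ (x s) hs
  rw [map_mul] at h1
  rw [eq_div_iff hy, h1]

end IsUltraproduct

lemma iota_algebraMap {S : Type*} {k : S → Type*} [∀ s, Field (k s)] {K : Type*} [Field K]
    (πK : (∀ s, k s) →+* K) {UF : Type*} [Field UF] (πF : (∀ s, RatFunc (k s)) →+* UF)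
    (ι : RatFunc K →+* UF)
    (hιC : ∀ f : ∀ s, k s, ι (RatFunc.C (πK f)) = πF fun s => RatFunc.C (f s))
    (hιX : ι RatFunc.X = πF fun s => RatFunc.X)
    (q : Polynomial (∀ s, k s)) :
    ι (algebraMap (Polynomial K) (RatFunc K) (q.map πK)) =
      πF (fun s => algebraMap (Polynomial (k s)) (RatFunc (k s)) (q.map (Pi.evalRingHom k s))) := by
  let Φ₁ : Polynomial (∀ s, k s) →+* UF :=
    ι.comp ((algebraMap (Polynomial K) (RatFunc K)).comp (mapRingHom πK))
  let Φ₂ : Polynomial (∀ s, k s) →+* UF :=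
    πF.comp (Pi.ringHom fun s =>
      (algebraMap (Polynomial (k s)) (RatFunc (k s))).comp (mapRingHom (Pi.evalRingHom k s)))
  have h : Φ₁ = Φ₂ := by
    apply Polynomial.ringHom_ext
    · intro a
      show ι (algebraMap (Polynomial K) (RatFunc K) ((Polynomial.C a).map πK))
        = πF (fun s => algebraMap (Polynomial (k s)) (RatFunc (k s))
            ((Polynomial.C a).map (Pi.evalRingHom k s)))
      simp only [Polynomial.map_C, RatFunc.algebraMap_C]
      exact hιC a
    · show ι (algebraMap (Polynomial K) (RatFunc K) ((Polynomial.X).map πK))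
        = πF (fun s => algebraMap (Polynomial (k s)) (RatFunc (k s))
            ((Polynomial.X).map (Pi.evalRingHom k s)))
      simp only [Polynomial.map_X, RatFunc.algebraMap_X]
      exact hιX
  exact RingHom.congr_fun h q

lemma key {S : Type*} {k : S → Type*} [∀ s, Field (k s)] {K : Type*} [Field K]
    {D : Ultrafilter S} {πK : (∀ s, k s) →+* K} (hK : IsUltraproduct D πK)
    {UF : Type*} [Field UF] {πF : (∀ s, RatFunc (k s)) →+* UF} (hUF : IsUltraproduct D πF)
    (ι : RatFunc K →+* UF)
    (hιC : ∀ f : ∀ s, k s, ι (RatFunc.C (πK f)) = πF fun s => RatFunc.C (f s))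
    (hιX : ι RatFunc.X = πF fun s => RatFunc.X)
    (P₀ : Polynomial (RatFunc K)) (hP₀ : P₀.Monic)
    (A' B' : Polynomial UF) (hmA : A'.Monic) (hmB : B'.Monic)
    {n dA dB : ℕ} (hn : P₀.natDegree = n) (hdA : A'.natDegree = dA) (hdB : B'.natDegree = dB)
    (hdA1 : 1 ≤ dA) (hdB1 : 1 ≤ dB)
    (hfact : P₀.map ι = A' * B') :
    ∀ j, A'.coeff j ∈ Set.range ι := by
  classical
  have hιinj : Function.Injective ι := ι.injective
  have hA'0 : A' ≠ 0 := hmA.ne_zero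
  have hB'0 : B' ≠ 0 := hmB.ne_zero
  have hsum : dA + dB = n := by
    rw [← hdA, ← hdB, ← natDegree_mul hA'0 hB'0, ← hfact, hP₀.natDegree_map, hn]
  have hdAn : dA < n := by omega
  -- common denominator for the coefficients of P₀
  obtain ⟨gd0, hgd0prop⟩ := IsLocalization.exist_integer_multiples
    (nonZeroDivisors (Polynomial K)) (Finset.range n) (fun i => P₀.coeff i)
  have hgd0 : (gd0 : Polynomial K) ≠ 0 := mem_nonZeroDivisors_iff_ne_zero.mp gd0.2
  have hf' : ∀ i : ℕ, ∃ q : Polynomial K, i < n →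
      P₀.coeff i = algebraMap (Polynomial K) (RatFunc K) q
        / algebraMap (Polynomial K) (RatFunc K) (gd0 : Polynomial K) := by
    intro i
    by_cases hi : i < n
    · obtain ⟨q, hq⟩ := hgd0prop i (Finset.mem_range.mpr hi)
      refine ⟨q, fun _ => ?_⟩
      rw [eq_div_iff (RatFunc.algebraMap_ne_zero hgd0), hq, Algebra.smul_def]
      ring
    · exact ⟨0, fun h => absurd h hi⟩
  choose f hf using hf'
  -- lift everything to the product ring
  obtain ⟨gt, hgt⟩ := Polynomial.map_surjective πK hK.1 (gd0 : Polynomial K)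
  choose ft hft using fun i => Polynomial.map_surjective πK hK.1 (f i)
  set M := ((Finset.range n).sup fun i => (ft i).natDegree) ⊔ gt.natDegree with hM
  set N := (2 * n + 1) * M with hN
  set gs : ∀ s, Polynomial (k s) := fun s => gt.map (Pi.evalRingHom k s) with hgs
  set fs : ℕ → ∀ s, Polynomial (k s) := fun i s => (ft i).map (Pi.evalRingHom k s) with hfs
  have hgsM : ∀ s, (gs s).natDegree ≤ M := fun s =>
    le_trans natDegree_map_le le_sup_right
  have hfsM : ∀ i, i < n → ∀ s, (fs i s).natDegree ≤ M := fun i hi s =>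
    le_trans natDegree_map_le
      (le_sup_of_le_left (Finset.le_sup (f := fun i => (ft i).natDegree)
        (Finset.mem_range.mpr hi)))
  choose σF hσF using hUF.1
  set pc : ℕ → ∀ s, RatFunc (k s) := fun i s =>
    algebraMap (Polynomial (k s)) (RatFunc (k s)) (fs i s)
      / algebraMap (Polynomial (k s)) (RatFunc (k s)) (gs s) with hpc
  set ac : ℕ → ∀ s, RatFunc (k s) := fun j => σF (A'.coeff j) with hac
  set bc : ℕ → ∀ s, RatFunc (k s) := fun j => σF (B'.coeff j) with hbc
  have hiA := iota_algebraMap πK πF ι hιC hιX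
  have hιg : ι (algebraMap (Polynomial K) (RatFunc K) (gd0 : Polynomial K))
      = πF fun s => algebraMap (Polynomial (k s)) (RatFunc (k s)) (gs s) := by
    have h := hiA gt; rwa [hgt] at h
  have hπgs_ne : (πF fun s => algebraMap (Polynomial (k s)) (RatFunc (k s)) (gs s)) ≠ 0 := by
    rw [← hιg]
    intro h0
    exact RatFunc.algebraMap_ne_zero hgd0 (hιinj (by rwa [map_zero]))
  have hπp : ∀ i, i < n → πF (pc i) = ι (P₀.coeff i) := by
    intro i hi
    have h1 : ι (algebraMap (Polynomial K) (RatFunc K) (f i))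
        = πF fun s => algebraMap (Polynomial (k s)) (RatFunc (k s)) (fs i s) := by
      have h := hiA (ft i); rwa [hft i] at h
    rw [hf i hi, map_div₀, h1, hιg]
    simp only [hpc]
    exact hUF.map_div (fun s => algebraMap (Polynomial (k s)) (RatFunc (k s)) (fs i s))
      (fun s => algebraMap (Polynomial (k s)) (RatFunc (k s)) (gs s)) hπgs_ne
  have hTg : {s | gs s ≠ 0} ∈ D := by
    obtain ⟨m, hm⟩ : ∃ m, (gd0 : Polynomial K).coeff m ≠ 0 := by
      by_contra hc
      push_neg at hc
      exact hgd0 (Polynomial.ext fun m => by rw [hc m, coeff_zero])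
    have h2 : πK (gt.coeff m) ≠ 0 := by
      have h3 : (gt.map πK).coeff m = πK (gt.coeff m) := coeff_map _ _
      rw [hgt] at h3; rw [← h3]; exact hm
    refine Filter.mem_of_superset ((hK.ne_zero_iff _).mp h2) fun s hs => ?_
    intro h0
    apply hs
    have h4 : (gs s).coeff m = gt.coeff m s := coeff_map _ _
    rw [h0] at h4; simpa using h4.symm
  -- aggregated polynomials over the product ring
  set Pt : Polynomial (∀ s, RatFunc (k s)) :=
    X ^ n + ∑ i ∈ Finset.range n, C (pc i) * X ^ i with hPt
  set At : Polynomial (∀ s, RatFunc (k s)) :=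
    X ^ dA + ∑ j ∈ Finset.range dA, C (ac j) * X ^ j with hAt
  set Bt : Polynomial (∀ s, RatFunc (k s)) :=
    X ^ dB + ∑ j ∈ Finset.range dB, C (bc j) * X ^ j with hBt
  have hP₀cn : P₀.coeff n = 1 := by rw [← hn]; exact hP₀.coeff_natDegree
  have hA'cd : A'.coeff dA = 1 := by rw [← hdA]; exact hmA.coeff_natDegree
  have hB'cd : B'.coeff dB = 1 := by rw [← hdB]; exact hmB.coeff_natDegree
  have hΘP : Pt.map πF = P₀.map ι := by
    ext i
    rw [coeff_map, coeff_map, hPt, shape_coeff]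
    rcases lt_trichotomy i n with hi | hi | hi
    · rw [if_neg (by omega), if_pos hi]; exact hπp i hi
    · rw [if_pos hi, hi, map_one, hP₀cn, map_one]
    · rw [if_neg (by omega), if_neg (by omega), map_zero,
        coeff_eq_zero_of_natDegree_lt (by omega), map_zero]
  have hΘA : At.map πF = A' := by
    ext i
    rw [coeff_map, hAt, shape_coeff]
    rcases lt_trichotomy i dA with hi | hi | hi
    · rw [if_neg (by omega), if_pos hi]; exact hσF (A'.coeff i)
    · rw [if_pos hi, hi, map_one, hA'cd]
    · rw [if_neg (by omega), if_neg (by omega), map_zero,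
        coeff_eq_zero_of_natDegree_lt (by omega)]
  have hΘB : Bt.map πF = B' := by
    ext i
    rw [coeff_map, hBt, shape_coeff]
    rcases lt_trichotomy i dB with hi | hi | hi
    · rw [if_neg (by omega), if_pos hi]; exact hσF (B'.coeff i)
    · rw [if_pos hi, hi, map_one, hB'cd]
    · rw [if_neg (by omega), if_neg (by omega), map_zero,
        coeff_eq_zero_of_natDegree_lt (by omega)]
  have hABt : Pt.map πF = (At * Bt).map πF := by
    rw [Polynomial.map_mul, hΘP, hΘA, hΘB, hfact]
  have hae : ∀ i : ℕ, {s | Pt.coeff i s = (At * Bt).coeff i s} ∈ D := by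
    intro i
    refine (hUF.2 _ _).mp ?_
    rw [← coeff_map, ← coeff_map, hABt]
  have hT1 : (⋂ i ∈ Finset.range (n + 1), {s | Pt.coeff i s = (At * Bt).coeff i s}) ∈ D :=
    (Filter.biInter_finset_mem _).mpr fun i _ => hae i
  have hTD : ({s | gs s ≠ 0} ∩
      ⋂ i ∈ Finset.range (n + 1), {s | Pt.coeff i s = (At * Bt).coeff i s}) ∈ D :=
    Filter.inter_mem hTg hT1
  set T := {s | gs s ≠ 0} ∩
      ⋂ i ∈ Finset.range (n + 1), {s | Pt.coeff i s = (At * Bt).coeff i s} with hTdef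
  have hAtdeg : At.natDegree ≤ dA := hAt ▸ shape_natDegree_le _ _
  have hBtdeg : Bt.natDegree ≤ dB := hBt ▸ shape_natDegree_le _ _
  have hAs : ∀ s, At.map (Pi.evalRingHom (fun s' => RatFunc (k s')) s)
      = X ^ dA + ∑ j ∈ Finset.range dA, C (ac j s) * X ^ j := by
    intro s
    rw [hAt]
    simp only [Polynomial.map_add, Polynomial.map_pow, Polynomial.map_X, Polynomial.map_sum,
      Polynomial.map_mul, Polynomial.map_C]
    rfl
  have hBs : ∀ s, Bt.map (Pi.evalRingHom (fun s' => RatFunc (k s')) s)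
      = X ^ dB + ∑ j ∈ Finset.range dB, C (bc j s) * X ^ j := by
    intro s
    rw [hBt]
    simp only [Polynomial.map_add, Polynomial.map_pow, Polynomial.map_X, Polynomial.map_sum,
      Polynomial.map_mul, Polynomial.map_C]
    rfl
  have hfacts : ∀ s ∈ T, (At.map (Pi.evalRingHom (fun s' => RatFunc (k s')) s))
      * (Bt.map (Pi.evalRingHom (fun s' => RatFunc (k s')) s))
      = Pt.map (Pi.evalRingHom (fun s' => RatFunc (k s')) s) := by
    intro s hs
    rw [← Polynomial.map_mul]
    ext i
    rw [coeff_map, coeff_map]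
    rcases le_or_gt i n with hi | hi
    · have h5 : Pt.coeff i s = (At * Bt).coeff i s :=
        Set.mem_iInter₂.mp hs.2 i (Finset.mem_range.mpr (by omega))
      exact h5.symm
    · have h0 : (At * Bt).natDegree ≤ n :=
        le_trans natDegree_mul_le (by rw [← hsum]; exact add_le_add hAtdeg hBtdeg)
      have h1 : (At * Bt).coeff i = 0 :=
        coeff_eq_zero_of_natDegree_lt (lt_of_le_of_lt h0 hi)
      have h2 : Pt.coeff i = 0 := by
        rw [hPt, shape_coeff, if_neg (by omega), if_neg (by omega)]
      rw [h1, h2]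
  have hAsm : ∀ s, (At.map (Pi.evalRingHom (fun s' => RatFunc (k s')) s)).Monic ∧
      (At.map (Pi.evalRingHom (fun s' => RatFunc (k s')) s)).natDegree = dA := by
    intro s; rw [hAs s]; exact shape_monic dA _
  have hBsm : ∀ s, (Bt.map (Pi.evalRingHom (fun s' => RatFunc (k s')) s)).Monic ∧
      (Bt.map (Pi.evalRingHom (fun s' => RatFunc (k s')) s)).natDegree = dB := by
    intro s; rw [hBs s]; exact shape_monic dB _
  -- the goal, coefficient by coefficient
  intro j
  by_cases hj' : dA ≤ j
  · rcases eq_or_lt_of_le hj' with hj | hj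
    · exact ⟨1, by rw [map_one, ← hj, hA'cd]⟩
    · exact ⟨0, by rw [map_zero]; exact (coeff_eq_zero_of_natDegree_lt (by omega)).symm⟩
  push_neg at hj'
  have hj : j < dA := hj'
  -- main case : j < dA
  have hcoreall : ∀ s, ∃ u : Polynomial (k s), u.natDegree ≤ N ∧
      (s ∈ T → ac j s * algebraMap (Polynomial (k s)) (RatFunc (k s)) (gs s ^ dA)
        = algebraMap (Polynomial (k s)) (RatFunc (k s)) u) := by
    intro s
    by_cases hs : s ∈ T
    · have hgs0 : gs s ≠ 0 := hs.1
      have hprod : ((At.map (Pi.evalRingHom (fun s' => RatFunc (k s')) s))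
          * (Bt.map (Pi.evalRingHom (fun s' => RatFunc (k s')) s))).natDegree = n := by
        rw [natDegree_mul (hAsm s).1.ne_zero (hBsm s).1.ne_zero, (hAsm s).2, (hBsm s).2, hsum]
      have hcoeffs : ∀ i < n, ((At.map (Pi.evalRingHom (fun s' => RatFunc (k s')) s))
          * (Bt.map (Pi.evalRingHom (fun s' => RatFunc (k s')) s))).coeff i
          = algebraMap (Polynomial (k s)) (RatFunc (k s)) (fs i s)
            / algebraMap (Polynomial (k s)) (RatFunc (k s)) (gs s) := by
        intro i hi
        rw [hfacts s hs, coeff_map]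
        have h6 : Pt.coeff i = pc i := by
          rw [hPt, shape_coeff, if_neg (by omega), if_pos hi]
        rw [h6]
        rfl
      obtain ⟨u, hu1, hu2⟩ := ratfunc_core hdA1 hdAn (gs s) hgs0 (hgsM s)
        (fun i => fs i s) (fun i hi => hfsM i hi s) _ _ (hAsm s).1 (hBsm s).1 (hAsm s).2
        hprod hcoeffs j
      refine ⟨u, hu1, fun _ => ?_⟩
      rw [← hu2]
      congr 1
      rw [hAs s, shape_coeff, if_neg (by omega), if_pos hj]
    · exact ⟨0, by simp, fun hmem => absurd hmem hs⟩
  choose uu huuN huurel using hcoreall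
  set Ut : Polynomial (∀ s, k s) :=
    ∑ m ∈ Finset.range (N + 1), C (fun s => (uu s).coeff m) * X ^ m with hUt
  have hUts : ∀ s, Ut.map (Pi.evalRingHom k s) = uu s := by
    intro s
    ext m
    rw [coeff_map]
    rcases le_or_gt m N with hm | hm
    · have h1 : Ut.coeff m = fun s' => (uu s').coeff m := by
        rw [hUt, shape2_coeff, if_pos (by omega)]
      rw [h1]
      rfl
    · have h1 : Ut.coeff m = 0 := by rw [hUt, shape2_coeff, if_neg (by omega)]
      rw [h1, map_zero, (coeff_eq_zero_of_natDegree_lt (lt_of_le_of_lt (huuN s) hm)).symm]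
  refine ⟨algebraMap (Polynomial K) (RatFunc K) (Ut.map πK)
    / algebraMap (Polynomial K) (RatFunc K) ((gd0 : Polynomial K) ^ dA), ?_⟩
  have h1 : ι (algebraMap (Polynomial K) (RatFunc K) (Ut.map πK))
      = πF fun s => algebraMap (Polynomial (k s)) (RatFunc (k s)) (uu s) := by
    rw [hiA Ut]
    congr 1
    funext s
    rw [hUts s]
  have h2 : ι (algebraMap (Polynomial K) (RatFunc K) ((gd0 : Polynomial K) ^ dA))
      = πF fun s => algebraMap (Polynomial (k s)) (RatFunc (k s)) (gs s ^ dA) := by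
    have h3 := hiA (gt ^ dA)
    rw [Polynomial.map_pow, hgt] at h3
    rw [h3]
    congr 1
    funext s
    rw [Polynomial.map_pow]
  have hden_ne : (πF fun s => algebraMap (Polynomial (k s)) (RatFunc (k s)) (gs s ^ dA)) ≠ 0 := by
    rw [← h2]
    intro h0
    exact RatFunc.algebraMap_ne_zero (pow_ne_zero dA hgd0) (hιinj (by rwa [map_zero]))
  rw [map_div₀, h1, h2, ← hUF.map_div _ _ hden_ne]
  have hAj : A'.coeff j = πF (ac j) := (hσF (A'.coeff j)).symm
  rw [hAj]
  refine (hUF.2 _ _).mpr (Filter.mem_of_superset hTD fun s hs => ?_)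
  have hden0 : algebraMap (Polynomial (k s)) (RatFunc (k s)) (gs s ^ dA) ≠ 0 :=
    RatFunc.algebraMap_ne_zero (pow_ne_zero dA hs.1)
  show algebraMap (Polynomial (k s)) (RatFunc (k s)) (uu s)
      / algebraMap (Polynomial (k s)) (RatFunc (k s)) (gs s ^ dA) = ac j s
  rw [div_eq_iff hden0]
  exact (huurel s hs).symm

/-- A polynomial over the rational function field `F = K(t)` (`K` the ultraproduct of the
constant fields) is irreducible over `F` iff it is irreducible over the ultra-hull
`U(F) = ∏ k_s(t) / D`, into which `F` embeds via `ι`. -/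
theorem stmt_10 {S : Type*} [Infinite S] (D : Ultrafilter S) (hD : ∀ s : S, D ≠ pure s)
    (k : S → Type*) [∀ s, Field (k s)] (K : Type*) [Field K]
    (πK : (∀ s, k s) →+* K) (hK : IsUltraproduct D πK)
    (UF : Type*) [Field UF] (πF : (∀ s, RatFunc (k s)) →+* UF)
    (hUF : IsUltraproduct D πF)
    (ι : RatFunc K →+* UF)
    (hιC : ∀ f : ∀ s, k s, ι (RatFunc.C (πK f)) = πF fun s => RatFunc.C (f s))
    (hιX : ι RatFunc.X = πF fun s => RatFunc.X)
    (P : Polynomial (RatFunc K)) :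
    Irreducible P ↔ Irreducible (P.map ι) := by
  have hιinj : Function.Injective ι := ι.injective
  constructor
  · -- hard direction
    intro hP
    have hP0 : P ≠ 0 := hP.ne_zero
    constructor
    · intro hu
      have hd := degree_eq_zero_of_isUnit hu
      rw [degree_map_eq_of_injective hιinj] at hd
      exact hP.not_isUnit (Polynomial.isUnit_iff_degree_eq_zero.mpr hd)
    · intro A B hAB
      by_contra hcon
      push_neg at hcon
      obtain ⟨hA, hB⟩ := hcon
      have hmap0 : P.map ι ≠ 0 := by
        intro h0
        exact hP0 (Polynomial.map_injective ι hιinj (by rwa [Polynomial.map_zero]))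
      have hA0 : A ≠ 0 := by rintro rfl; rw [zero_mul] at hAB; exact hmap0 hAB
      have hB0 : B ≠ 0 := by rintro rfl; rw [mul_zero] at hAB; exact hmap0 hAB
      have hdA1 : 1 ≤ A.natDegree := by
        rcases Nat.eq_zero_or_pos A.natDegree with h | h
        · exfalso
          apply hA
          rw [Polynomial.eq_C_of_natDegree_eq_zero h]
          refine Polynomial.isUnit_C.mpr (isUnit_iff_ne_zero.mpr ?_)
          intro h0
          apply hA0
          rw [Polynomial.eq_C_of_natDegree_eq_zero h, h0, map_zero]
        · exact h
      have hdB1 : 1 ≤ B.natDegree := by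
        rcases Nat.eq_zero_or_pos B.natDegree with h | h
        · exfalso
          apply hB
          rw [Polynomial.eq_C_of_natDegree_eq_zero h]
          refine Polynomial.isUnit_C.mpr (isUnit_iff_ne_zero.mpr ?_)
          intro h0
          apply hB0
          rw [Polynomial.eq_C_of_natDegree_eq_zero h, h0, map_zero]
        · exact h
      set lA := A.leadingCoeff with hlA
      have hlA0 : lA ≠ 0 := leadingCoeff_ne_zero.mpr hA0
      set lP := P.leadingCoeff with hlP
      have hlP0 : lP ≠ 0 := leadingCoeff_ne_zero.mpr hP0
      have hιlP0 : ι lP ≠ 0 := fun h0 => hlP0 (hιinj (by rwa [map_zero]))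
      set P₀ := P * C lP⁻¹ with hP₀def
      have hP₀monic : P₀.Monic := monic_mul_leadingCoeff_inv hP0
      set A₀ := A * C lA⁻¹ with hA₀def
      have hA₀monic : A₀.Monic := monic_mul_leadingCoeff_inv hA0
      set B₀ := B * C (lA * (ι lP)⁻¹) with hB₀def
      have hfact : P₀.map ι = A₀ * B₀ := by
        rw [hP₀def, hA₀def, hB₀def, Polynomial.map_mul, Polynomial.map_C, hAB, map_inv₀]
        have hC : (C (ι lP)⁻¹ : Polynomial UF) = C lA⁻¹ * C (lA * (ι lP)⁻¹) := by
          rw [← C_mul, inv_mul_cancel_left₀ hlA0]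
        rw [hC]; ring
      have hB₀monic : B₀.Monic := by
        have h1 : (P₀.map ι).leadingCoeff = 1 := (hP₀monic.map ι).leadingCoeff
        rw [hfact, leadingCoeff_mul, hA₀monic.leadingCoeff, one_mul] at h1
        exact h1
      have hB₀0 : B₀ ≠ 0 := hB₀monic.ne_zero
      have hA₀0 : A₀ ≠ 0 := hA₀monic.ne_zero
      have hdegA₀ : A₀.natDegree = A.natDegree := by
        rw [hA₀def, natDegree_mul hA0 (by simpa using inv_ne_zero hlA0), natDegree_C, add_zero]
      have hdegB₀ : B₀.natDegree = B.natDegree := by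
        rw [hB₀def, natDegree_mul hB0
          (by simpa using mul_ne_zero hlA0 (inv_ne_zero hιlP0)), natDegree_C, add_zero]
      have hkeyA := key hK hUF ι hιC hιX P₀ hP₀monic A₀ B₀ hA₀monic hB₀monic
        rfl rfl rfl (by omega) (by omega) hfact
      have hkeyB := key hK hUF ι hιC hιX P₀ hP₀monic B₀ A₀ hB₀monic hA₀monic
        rfl rfl rfl (by omega) (by omega) (by rw [hfact]; ring)
      obtain ⟨Abar, hAbar⟩ := (Polynomial.mem_lifts _).mp
        ((Polynomial.lifts_iff_coeff_lifts _).mpr hkeyA)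
      obtain ⟨Bbar, hBbar⟩ := (Polynomial.mem_lifts _).mp
        ((Polynomial.lifts_iff_coeff_lifts _).mpr hkeyB)
      have hfac2 : P₀ = Abar * Bbar := by
        apply Polynomial.map_injective ι hιinj
        rw [hfact, Polynomial.map_mul, hAbar, hBbar]
      have hPfac : P = (Abar * C lP) * Bbar := by
        have h3 : P = P₀ * C lP := by
          rw [hP₀def, mul_assoc, ← C_mul, inv_mul_cancel₀ hlP0, C_1, mul_one]
        rw [h3, hfac2]; ring
      have hdegAbar : Abar.natDegree = A.natDegree := by
        have h4 := natDegree_map_eq_of_injective hιinj Abar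
        rw [hAbar] at h4
        omega
      have hdegBbar : Bbar.natDegree = B.natDegree := by
        have h4 := natDegree_map_eq_of_injective hιinj Bbar
        rw [hBbar] at h4
        omega
      rcases hP.isUnit_or_isUnit hPfac with hu | hu
      · have hd : (Abar * C lP).natDegree = 0 :=
          natDegree_eq_of_degree_eq_some (degree_eq_zero_of_isUnit hu)
        rw [natDegree_mul (fun h0 => by rw [h0, natDegree_zero] at hdegAbar; omega)
          (fun h0 => hlP0 (C_eq_zero.mp h0)), natDegree_C, add_zero] at hd
        omega
      · have hd : Bbar.natDegree = 0 :=
          natDegree_eq_of_degree_eq_some (degree_eq_zero_of_isUnit hu)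
        omega
  · -- easy direction
    intro hQ
    refine ⟨fun hu => hQ.not_isUnit ?_, fun a b hab => ?_⟩
    · have h1 : IsUnit (Polynomial.mapRingHom ι P) := hu.map (Polynomial.mapRingHom ι)
      simpa using h1
    · have h2 := hQ.isUnit_or_isUnit (by rw [hab, Polynomial.map_mul])
      rcases h2 with hu | hu
      · left
        have hd := degree_eq_zero_of_isUnit hu
        rw [degree_map_eq_of_injective hιinj] at hd
        exact Polynomial.isUnit_iff_degree_eq_zero.mpr hd
      · right
        have hd := degree_eq_zero_of_isUnit hu
        rw [degree_map_eq_of_injective hιinj] at hd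
        exact Polynomial.isUnit_iff_degree_eq_zero.mpr hd
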